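/- The correspondence μ ↦ 𝒱(μ) from Δ(X) to subsets of ℝ^n is upper hemicontinuous: for every sequence μ_m → μ in Δ(X) and every sequence v_m ∈ 𝒱(μ_m) with v_m → v in ℝ^n, one has v ∈ 𝒱(μ). -/
import Mathlib


open MeasureTheory Topology Filter

set_option maxHeartbeats 1000000
noncomputable section

/-- Expected value `E_P[W] = ∫ W(ν) dP(ν)` of a function `W : Δ(X) → ℝ`
under a Borel probability measure `P ∈ Δ²(X)` on the simplex `Δ(X)`. -/
def expct {X : Type*} [Fintype X] (P : ProbabilityMeasure (stdSimplex ℝ X))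
    (W : stdSimplex ℝ X → ℝ) : ℝ :=
  ∫ ν, W ν ∂(P : Measure (stdSimplex ℝ X))

/-- `P ∈ Δ²(X)` has barycenter `E_P[ν] = μ`. -/
def isBary {X : Type*} [Fintype X] (P : ProbabilityMeasure (stdSimplex ℝ X))
    (μ : stdSimplex ℝ X) : Prop :=
  ∀ x : X, expct P (fun ν => (ν : X → ℝ) x) = (μ : X → ℝ) x

/-- `P ∈ Δ²(X)` has support of size at most `m`: it is a convex combination of at
most `m` Dirac measures on `Δ(X)`. -/
def finSupp {X : Type*} [Fintype X] (P : ProbabilityMeasure (stdSimplex ℝ X)) (m : ℕ) : Prop :=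
  ∃ (p : Fin m → ℝ) (ν : Fin m → stdSimplex ℝ X),
    (∀ j, 0 ≤ p j) ∧ (∑ j, p j = 1) ∧
    (P : Measure (stdSimplex ℝ X)) = ∑ j, ENNReal.ofReal (p j) • Measure.dirac (ν j)

/-- The information possibility set
`𝒱(μ) = {(E_P[V^1], …, E_P[V^n]) : P ∈ Δ²(X), E_P[ν] = μ} ⊆ ℝ^n`. -/
def VSet {X : Type*} [Fintype X] {n : ℕ} (V : Fin n → stdSimplex ℝ X → ℝ)
    (μ : stdSimplex ℝ X) : Set (Fin n → ℝ) :=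
  {v | ∃ P : ProbabilityMeasure (stdSimplex ℝ X), isBary P μ ∧ ∀ i, expct P (V i) = v i}

/-- A continuous function on a compact space is integrable w.r.t. any finite measure. -/
lemma cont_integrable {α : Type*} [TopologicalSpace α] [CompactSpace α] [T2Space α]
    [MeasurableSpace α] [OpensMeasurableSpace α] {G : Type*} [NormedAddCommGroup G]
    {f : α → G} (hf : Continuous f) (M : MeasureTheory.Measure α) [IsFiniteMeasure M] :
    Integrable f M :=
  hf.integrable_of_hasCompactSupport
    (IsCompact.of_isClosed_subset isCompact_univ (isClosed_tsupport _) (Set.subset_univ _))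

/-- the correspondence `μ ↦ 𝒱(μ)` is upper hemicontinuous: if `μ_m → μ`,
`v_m ∈ 𝒱(μ_m)` and `v_m → v`, then `v ∈ 𝒱(μ)`. -/
theorem statement_8 {X : Type*} [Fintype X] [Nonempty X] {n : ℕ}
    (V : Fin n → stdSimplex ℝ X → ℝ) (hV : ∀ i, Continuous (V i))
    (μs : ℕ → stdSimplex ℝ X) (μ : stdSimplex ℝ X)
    (hμ : Tendsto μs atTop (𝓝 μ))
    (vs : ℕ → Fin n → ℝ) (v : Fin n → ℝ)
    (hvs : ∀ m, vs m ∈ VSet V (μs m))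
    (hv : Tendsto vs atTop (𝓝 v)) :
    v ∈ VSet V μ := by
  classical
  -- ambient space and the graph map
  let F : stdSimplex ℝ X → (X → ℝ) × (Fin n → ℝ) := fun ν => ((ν : X → ℝ), fun i => V i ν)
  have hc1 : Continuous (fun ν : stdSimplex ℝ X => (ν : X → ℝ)) := continuous_subtype_val
  have hc2 : Continuous (fun ν : stdSimplex ℝ X => fun i => V i ν) := continuous_pi fun i => hV i
  have hFc : Continuous F := hc1.prodMk hc2
  -- the integral of F under a representing measure is (μ', v')
  have key : ∀ (P : ProbabilityMeasure (stdSimplex ℝ X)) (μ' : stdSimplex ℝ X) (v' : Fin n → ℝ),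
      isBary P μ' → (∀ i, expct P (V i) = v' i) →
      (∫ ν, F ν ∂(P : Measure (stdSimplex ℝ X))) = ((μ' : X → ℝ), v') := by
    intro P μ' v' hb hval
    have h1 : Integrable (fun ν : stdSimplex ℝ X => (ν : X → ℝ))
        (P : Measure (stdSimplex ℝ X)) := cont_integrable hc1 _
    have h2 : Integrable (fun ν : stdSimplex ℝ X => fun i => V i ν)
        (P : Measure (stdSimplex ℝ X)) := cont_integrable hc2 _
    have hpair : (∫ ν, F ν ∂(P : Measure (stdSimplex ℝ X))) =
        (∫ ν, (ν : X → ℝ) ∂(P : Measure (stdSimplex ℝ X)),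
         ∫ ν, (fun i => V i ν) ∂(P : Measure (stdSimplex ℝ X))) :=
      integral_pair h1 h2
    rw [hpair]
    refine Prod.ext ?_ ?_
    · funext x
      have h := (ContinuousLinearMap.proj (R := ℝ) (φ := fun _ : X => ℝ) x).integral_comp_comm h1
      simpa [expct] using (h.symm.trans (hb x))
    · funext i
      have h := (ContinuousLinearMap.proj (R := ℝ) (φ := fun _ : Fin n => ℝ) i).integral_comp_comm h2
      simpa [expct] using (h.symm.trans (hval i))
  -- the closed convex hull of the range of F
  set C : Set ((X → ℝ) × (Fin n → ℝ)) := closure (convexHull ℝ (Set.range F)) with hC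
  have hCconv : Convex ℝ C := (convex_convexHull ℝ _).closure
  have hCclosed : IsClosed C := isClosed_closure
  have hmem : ∀ m, (((μs m : X → ℝ), vs m) : (X → ℝ) × (Fin n → ℝ)) ∈ C := by
    intro m
    obtain ⟨P, hb, hval⟩ := hvs m
    have hFi : Integrable F (P : Measure (stdSimplex ℝ X)) := cont_integrable hFc _
    have h := hCconv.integral_mem hCclosed
      (Filter.Eventually.of_forall fun ν => subset_closure (subset_convexHull ℝ _ ⟨ν, rfl⟩)) hFi
    rwa [key P (μs m) (vs m) hb hval] at h
  -- pass to the limit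
  have hlim : (((μ : X → ℝ), v) : (X → ℝ) × (Fin n → ℝ)) ∈ C := by
    have ht : Tendsto (fun m => (((μs m : X → ℝ), vs m) : (X → ℝ) × (Fin n → ℝ))) atTop
        (𝓝 ((μ : X → ℝ), v)) :=
      ((continuous_subtype_val.tendsto μ).comp hμ).prodMk_nhds hv
    exact hCclosed.mem_of_tendsto ht (Filter.Eventually.of_forall hmem)
  -- Carathéodory: C is contained in the range of a combination map on a compact set
  set N : ℕ := Module.finrank ℝ ((X → ℝ) × (Fin n → ℝ)) + 1 with hN
  let G : (stdSimplex ℝ (Fin N)) × (Fin N → stdSimplex ℝ X) → (X → ℝ) × (Fin n → ℝ) :=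
    fun q => ∑ j, ((q.1 : Fin N → ℝ) j) • F (q.2 j)
  have hGc : Continuous G := by
    refine continuous_finset_sum _ fun j _ => ?_
    exact ((continuous_apply j).comp (continuous_subtype_val.comp continuous_fst)).smul
      (hFc.comp ((continuous_apply j).comp continuous_snd))
  have hGrange_closed : IsClosed (Set.range G) := (isCompact_range hGc).isClosed
  have hhull : convexHull ℝ (Set.range F) ⊆ Set.range G := by
    intro x hx
    obtain ⟨ι, hι, z, w, hzr, hAI, hwpos, hwsum, hwz⟩ :=
      eq_pos_convex_span_of_mem_convexHull hx
    have hcard : Fintype.card ι ≤ N := by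
      have h1 := hAI.card_le_finrank_succ
      have h2 : Module.finrank ℝ (vectorSpan ℝ (Set.range z)) ≤
          Module.finrank ℝ ((X → ℝ) × (Fin n → ℝ)) := Submodule.finrank_le _
      omega
    obtain ⟨e⟩ : Nonempty (ι ↪ Fin N) :=
      Function.Embedding.nonempty_of_card_le (by simpa using hcard)
    -- choose preimages under F
    have hz' : ∀ i, ∃ ν, F ν = z i := fun i => hzr ⟨i, rfl⟩
    choose ζ hζ using hz'
    let ν0 : stdSimplex ℝ X :=
      ⟨Pi.single (Classical.arbitrary X) 1, single_mem_stdSimplex ℝ _⟩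
    let p : Fin N → ℝ := fun j => ∑ i, if e i = j then w i else 0
    let νf : Fin N → stdSimplex ℝ X := fun j =>
      if h : ∃ i, e i = j then ζ h.choose else ν0
    have hp0 : ∀ j, 0 ≤ p j := by
      intro j
      refine Finset.sum_nonneg fun i _ => ?_
      split
      · exact (hwpos i).le
      · rfl
    have hp1 : ∑ j, p j = 1 := by
      show ∑ j, ∑ i, (if e i = j then w i else 0) = 1
      rw [Finset.sum_comm]
      simp only [Finset.sum_ite_eq, Finset.mem_univ, if_true]
      exact hwsum
    have hνe : ∀ i, νf (e i) = ζ i := by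
      intro i
      have h : ∃ i', e i' = e i := ⟨i, rfl⟩
      have he : h.choose = i := e.injective h.choose_spec
      simp only [νf, dif_pos h, he]
    refine ⟨(⟨p, hp0, hp1⟩, νf), ?_⟩
    show ∑ j, p j • F (νf j) = x
    have hstep : ∀ j, p j • F (νf j) = ∑ i, if e i = j then w i • F (νf j) else 0 := by
      intro j
      rw [show p j • F (νf j) = (∑ i, if e i = j then w i else 0) • F (νf j) from rfl,
        Finset.sum_smul]
      exact Finset.sum_congr rfl fun i _ => by split <;> simp
    simp_rw [hstep]
    rw [Finset.sum_comm]
    have hrow : ∀ i, (∑ j, if e i = j then w i • F (νf j) else 0) = w i • z i := by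
      intro i
      rw [Finset.sum_ite_eq, if_pos (Finset.mem_univ _), hνe i, hζ i]
    simp_rw [hrow]
    exact hwz
  have hCsub : C ⊆ Set.range G := closure_minimal hhull hGrange_closed
  -- extract the finite representation of (μ, v)
  obtain ⟨⟨⟨p, hp0, hp1⟩, νf⟩, hq⟩ := hCsub hlim
  -- build the finitely supported probability measure
  let M : Measure (stdSimplex ℝ X) := ∑ j, ENNReal.ofReal (p j) • Measure.dirac (νf j)
  have hMprob : IsProbabilityMeasure M := by
    constructor
    simp only [M, Measure.coe_finset_sum, Finset.sum_apply, Measure.smul_apply,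
      Measure.dirac_apply_of_mem (Set.mem_univ _), smul_eq_mul, mul_one]
    rw [← ENNReal.ofReal_sum_of_nonneg fun j _ => hp0 j, hp1, ENNReal.ofReal_one]
  let P : ProbabilityMeasure (stdSimplex ℝ X) := ⟨M, hMprob⟩
  -- expected values under P are finite convex combinations
  have hexp : ∀ (W : stdSimplex ℝ X → ℝ), Continuous W →
      expct P W = ∑ j, p j * W (νf j) := by
    intro W hW
    have hWi : Integrable W M := cont_integrable hW M
    have hint : ∀ j : Fin N, Integrable W (ENNReal.ofReal (p j) • Measure.dirac (νf j)) := by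
      intro j
      refine hWi.mono_measure ?_
      have hsum : M = Measure.sum (fun j => ENNReal.ofReal (p j) • Measure.dirac (νf j)) :=
        (Measure.sum_fintype _).symm
      rw [hsum]
      exact Measure.le_sum _ j
    rw [show expct P W = ∫ ν, W ν ∂M from rfl,
      MeasureTheory.integral_finset_sum_measure fun j _ => hint j]
    refine Finset.sum_congr rfl fun j _ => ?_
    rw [MeasureTheory.integral_smul_measure, MeasureTheory.integral_dirac,
      ENNReal.toReal_ofReal (hp0 j), smul_eq_mul]
  -- unpack the identity G q = (μ, v)
  have hq1 : (∑ j, p j • F (νf j)).1 = (μ : X → ℝ) := by rw [show ∑ j, p j • F (νf j) = G (⟨p, hp0, hp1⟩, νf) from rfl, hq]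
  have hq2 : (∑ j, p j • F (νf j)).2 = v := by rw [show ∑ j, p j • F (νf j) = G (⟨p, hp0, hp1⟩, νf) from rfl, hq]
  refine ⟨P, ?_, ?_⟩
  · intro x
    have hWc : Continuous (fun ν : stdSimplex ℝ X => (ν : X → ℝ) x) :=
      (continuous_apply x).comp continuous_subtype_val
    rw [hexp _ hWc]
    have h := congrFun hq1 x
    rw [Prod.fst_sum] at h
    simpa [F, Finset.sum_apply, smul_eq_mul] using h
  · intro i
    rw [hexp _ (hV i)]
    have h := congrFun hq2 i
    rw [Prod.snd_sum] at h
    simpa [F, Finset.sum_apply, smul_eq_mul] using h
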